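/- For all real numbers t and x with 0 ≤ t ≤ 1 and 0 ≤ x ≤ 1, one has (1 + t)^x ≤ 1 + (2^x − 1)·t^x. -/

import Mathlib

lemma aux_diff (u x : ℝ) (hu : 1 ≤ u) (hx0 : 0 ≤ x) (hx1 : x ≤ 1) :
    (u + 1) ^ x + 1 ≤ 2 ^ x + u ^ x := by
  have hconc := Real.concaveOn_rpow hx0 hx1
  have hu0 : (0:ℝ) < u := lt_of_lt_of_le one_pos hu
  set a : ℝ := 1 - 1/u with ha
  set b : ℝ := 1/u with hb
  have hb0 : 0 ≤ b := by positivity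
  have hb1 : b ≤ 1 := by rw [hb]; rw [div_le_one hu0]; exact hu
  have ha0 : 0 ≤ a := by simp [ha]; exact hb1
  have hab : a + b = 1 := by ring
  have h1 : (1:ℝ) ∈ Set.Ici (0:ℝ) := by norm_num
  have h2 : u + 1 ∈ Set.Ici (0:ℝ) := by simp; linarith
  have key1 := hconc.2 h1 h2 ha0 hb0 hab
  have key2 := hconc.2 h1 h2 hb0 ha0 (by linarith)
  have e1 : a * 1 + b * (u + 1) = 2 := by
    field_simp [ha, hb]; linear_combination hab + (by rw [hb, one_div_mul_cancel hu0.ne'] : b * u = 1)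
  have e2 : b * 1 + a * (u + 1) = u := by
    field_simp [ha, hb]; linear_combination (1 + u) * hab - (by rw [hb, one_div_mul_cancel hu0.ne'] : b * u = 1)
  have h1x : (1:ℝ) ^ x = 1 := Real.one_rpow x
  simp only [smul_eq_mul, h1x] at key1 key2
  rw [e1] at key1
  rw [e2] at key2
  have hm : a * (u + 1) ^ x + b * (u + 1) ^ x = (u + 1) ^ x := by
    rw [← add_mul, hab, one_mul]
  linarith [key1, key2, hm, hab]

theorem pow_ineq_le (t x : ℝ) (ht0 : 0 ≤ t) (ht1 : t ≤ 1) (hx0 : 0 ≤ x) (hx1 : x ≤ 1) :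
    (1 + t) ^ x ≤ 1 + (2 ^ x - 1) * t ^ x := by
  rcases eq_or_lt_of_le ht0 with h | ht0'
  · subst h
    simp [Real.one_rpow]
    rcases eq_or_lt_of_le hx0 with h | hx0'
    · simp [← h]
    · rw [Real.zero_rpow (ne_of_gt hx0')]
      simp
  · have hu : 1 ≤ 1/t := by rw [le_div_iff₀ ht0']; linarith
    have key := aux_diff (1/t) x hu hx0 hx1
    have htx : 0 < t ^ x := Real.rpow_pos_of_pos ht0' x
    have hmul := mul_le_mul_of_nonneg_left key (le_of_lt htx)
    have e1 : t ^ x * (1/t + 1) ^ x = (1 + t) ^ x := by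
      rw [← Real.mul_rpow ht0 (by positivity)]
      congr 1
      field_simp
    have e2 : t ^ x * (1/t) ^ x = 1 := by
      rw [← Real.mul_rpow ht0 (by positivity)]
      rw [mul_one_div, div_self (ne_of_gt ht0'), Real.one_rpow]
    nlinarith [hmul, e1, e2]
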